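/- Let n ≥ d ≥ 1 be integers and let a_1 ≤ … ≤ a_n be integers with 1 ≤ a_i ≤ d for all i and a_1 + … + a_n > d. For i ≥ 0 let H(i) be the number of tuples (α_1,…,α_n) of non-negative integers with α_1 + … + α_n = i·d and α_j ≤ i·a_j for all j. Then the formal power series (1 − t)^n · Σ_{i≥0} H(i) t^i over ℤ is a polynomial of degree at most n − ⌈n/d⌉; equivalently, its coefficient of t^m vanishes for every m > n − ⌈n/d⌉. (Hence the a-invariant of 𝒱(a_1,…,a_n; d), i.e. the degree of its Hilbert series as a rational function, is at most −⌈n/d⌉.) -/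

import Mathlib

open Finset

open Polynomial


lemma alt_sum_choose_mul_pow : ∀ (j n : ℕ), j < n →
    ∑ k ∈ range (n + 1), (-1 : ℚ) ^ k * (n.choose k : ℚ) * (k : ℚ) ^ j = 0 := by
  intro j
  induction j using Nat.strong_induction_on with
  | _ j ih =>
    intro n hj
    match j with
    | 0 =>
      simp only [pow_zero, mul_one]
      have := @Int.alternating_sum_range_choose n
      rw [if_neg (by omega)] at this
      have h2 := congrArg (fun z : ℤ => (z : ℚ)) this
      push_cast at h2
      convert h2 using 2 with k hk
      all_goals push_cast; try ring
    | j + 1 =>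
      obtain ⟨n', rfl⟩ : ∃ n', n = n' + 1 := ⟨n - 1, by omega⟩
      rw [Finset.sum_range_succ']
      have h0 : (-1 : ℚ) ^ 0 * (((n' + 1).choose 0 : ℕ) : ℚ) * ((0 : ℕ) : ℚ) ^ (j + 1) = 0 := by
        norm_num
      rw [h0, add_zero]
      have key : ∀ l : ℕ, (-1 : ℚ) ^ (l + 1) * ((n' + 1).choose (l + 1) : ℚ) * ((l + 1 : ℕ) : ℚ) ^ (j + 1)
          = -((n' + 1 : ℚ)) * ∑ i ∈ range (j + 1), (j.choose i : ℚ) * ((-1) ^ l * (n'.choose l : ℚ) * (l : ℚ) ^ i) := by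
        intro l
        have hc : ((n' + 1).choose (l + 1) : ℚ) * ((l + 1 : ℕ) : ℚ) = (n' + 1 : ℚ) * (n'.choose l : ℚ) := by
          have := Nat.add_one_mul_choose_eq n' l
          exact_mod_cast congrArg (fun x : ℕ => (x : ℚ)) this.symm
        have hb : ((l + 1 : ℕ) : ℚ) ^ j = ∑ i ∈ range (j + 1), (l : ℚ) ^ i * (j.choose i : ℚ) := by
          have := add_pow (l : ℚ) 1 j
          simpa using this
        calc (-1 : ℚ) ^ (l + 1) * ((n' + 1).choose (l + 1) : ℚ) * ((l + 1 : ℕ) : ℚ) ^ (j + 1)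
            = (-1 : ℚ) ^ (l+1) * (((n' + 1).choose (l + 1) : ℚ) * ((l + 1 : ℕ) : ℚ)) * ((l + 1 : ℕ) : ℚ) ^ j := by ring
          _ = (-1 : ℚ) ^ (l+1) * ((n' + 1 : ℚ) * (n'.choose l : ℚ)) * ∑ i ∈ range (j + 1), (l : ℚ) ^ i * (j.choose i : ℚ) := by rw [hc, hb]
          _ = -((n' + 1 : ℚ)) * ∑ i ∈ range (j + 1), (j.choose i : ℚ) * ((-1) ^ l * (n'.choose l : ℚ) * (l : ℚ) ^ i) := by
              rw [Finset.mul_sum, Finset.mul_sum]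
              refine Finset.sum_congr rfl fun i _ => by ring
      rw [Finset.sum_congr rfl (fun l _ => key l), ← Finset.mul_sum, Finset.sum_comm]
      have : ∑ i ∈ range (j + 1), ∑ l ∈ range (n' + 1), (j.choose i : ℚ) * ((-1) ^ l * (n'.choose l : ℚ) * (l : ℚ) ^ i) = 0 := by
        refine Finset.sum_eq_zero fun i hi => ?_
        have hi' := mem_range.mp hi
        rw [← Finset.mul_sum, ih i (by omega) n' (by omega), mul_zero]
      rw [this, mul_zero]

lemma alt_sum_poly (n : ℕ) (hn : 0 < n) (P : Polynomial ℚ) (hP : P.natDegree < n) :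
    ∑ k ∈ range (n + 1), (-1 : ℚ) ^ k * (n.choose k : ℚ) * P.eval (k : ℚ) = 0 := by
  have heval : ∀ x : ℚ, P.eval x = ∑ i ∈ range n, P.coeff i * x ^ i := fun x =>
    Polynomial.eval_eq_sum_range' hP x
  calc ∑ k ∈ range (n + 1), (-1 : ℚ) ^ k * (n.choose k : ℚ) * P.eval (k : ℚ)
      = ∑ k ∈ range (n + 1), ∑ i ∈ range n, P.coeff i * ((-1 : ℚ) ^ k * (n.choose k : ℚ) * (k : ℚ) ^ i) := by
        refine Finset.sum_congr rfl fun k _ => ?_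
        rw [heval, Finset.mul_sum]
        refine Finset.sum_congr rfl fun i _ => by ring
    _ = ∑ i ∈ range n, P.coeff i * ∑ k ∈ range (n + 1), (-1 : ℚ) ^ k * (n.choose k : ℚ) * (k : ℚ) ^ i := by
        rw [Finset.sum_comm]; exact Finset.sum_congr rfl fun i _ => by rw [Finset.mul_sum]
    _ = 0 := by
        refine Finset.sum_eq_zero fun i hi => ?_
        rw [alt_sum_choose_mul_pow i n (mem_range.mp hi), mul_zero]


lemma card_adt : ∀ (k N : ℕ), (Finset.Nat.antidiagonalTuple (k + 1) N).card = (N + k).choose k := by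
  intro k
  induction k with
  | zero => intro N; rw [Finset.Nat.antidiagonalTuple_one]; simp
  | succ k ih =>
    intro N
    have hbij : (Finset.Nat.antidiagonalTuple (k + 2) N).card
        = ((Finset.HasAntidiagonal.antidiagonal N).sigma
            (fun p => Finset.Nat.antidiagonalTuple (k + 1) p.2)).card := by
      refine Finset.card_bij' (fun f _ => ⟨(f 0, ∑ i, Fin.tail f i), Fin.tail f⟩)
        (fun pg _ => Fin.cons pg.1.1 pg.2) ?_ ?_ ?_ ?_
      · intro f hf
        rw [Finset.Nat.mem_antidiagonalTuple] at hf
        rw [Finset.mem_sigma, Finset.HasAntidiagonal.mem_antidiagonal, Finset.Nat.mem_antidiagonalTuple]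
        refine ⟨?_, rfl⟩
        show f 0 + ∑ i, Fin.tail f i = N
        rw [← hf, Fin.sum_univ_succ, Fin.sum_univ_succ]
        simp [Fin.tail, Fin.sum_univ_succ]
      · intro pg hpg
        rw [Finset.mem_sigma, Finset.HasAntidiagonal.mem_antidiagonal, Finset.Nat.mem_antidiagonalTuple] at hpg
        rw [Finset.Nat.mem_antidiagonalTuple, Fin.sum_univ_succ]
        simp [Fin.cons_zero, Fin.cons_succ, hpg.2, hpg.1]
      · intro f hf; exact Fin.cons_self_tail f
      · intro pg hpg
        rw [Finset.mem_sigma, Finset.HasAntidiagonal.mem_antidiagonal, Finset.Nat.mem_antidiagonalTuple] at hpg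
        simp only [Fin.cons_zero, Fin.tail_cons, hpg.2]
    rw [hbij, Finset.card_sigma]
    have : ∀ p ∈ Finset.HasAntidiagonal.antidiagonal N, (Finset.Nat.antidiagonalTuple (k + 1) p.2).card
        = (p.2 + k).choose k := fun p _ => ih p.2
    rw [Finset.sum_congr rfl this, Finset.Nat.sum_antidiagonal_eq_sum_range_succ_mk]
    have hrefl : ∑ i ∈ range (N + 1), ((N - i) + k).choose k
        = ∑ i ∈ range (N + 1), (i + k).choose k := by
      rw [← Finset.sum_range_reflect]
      refine Finset.sum_congr rfl fun i hi => ?_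
      have := mem_range.mp hi; congr 2; omega
    rw [hrefl]
    have hicc : ∑ i ∈ range (N + 1), (i + k).choose k = ∑ m ∈ Icc k (N + k), m.choose k := by
      rw [← Finset.Ico_add_one_right_eq_Icc, Finset.sum_Ico_eq_sum_range]
      have h1 : N + k + 1 - k = N + 1 := by omega
      rw [h1]
      refine Finset.sum_congr rfl fun i _ => by rw [add_comm k i]
    rw [hicc, Nat.sum_Icc_choose, Nat.add_assoc]


lemma card_filter_lb (ν N : ℕ) (c : Fin ν → ℕ) (S : Finset (Fin ν)) :
    (((Finset.Nat.antidiagonalTuple ν N).filter (fun f => ∀ j ∈ S, c j < f j)).card : ℤ)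
      = if (∑ j ∈ S, (c j + 1)) ≤ N
        then ((Finset.Nat.antidiagonalTuple ν (N - ∑ j ∈ S, (c j + 1))).card : ℤ) else 0 := by
  set δ : Fin ν → ℕ := fun j => if j ∈ S then c j + 1 else 0 with hδ
  have hδsum : ∑ j, δ j = ∑ j ∈ S, (c j + 1) := by
    rw [hδ, Finset.sum_ite_mem, univ_inter]
  split_ifs with h
  · norm_cast
    refine Finset.card_bij' (fun f _ => fun j => f j - δ j) (fun g _ => fun j => g j + δ j)
      ?_ ?_ ?_ ?_
    · intro f hf
      rw [Finset.mem_filter, Finset.Nat.mem_antidiagonalTuple] at hf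
      rw [Finset.Nat.mem_antidiagonalTuple]
      have hdle : ∀ j, δ j ≤ f j := by
        intro j
        by_cases hj : j ∈ S
        · simpa [hδ, hj] using hf.2 j hj
        · simp [hδ, hj]
      show ∑ i, (f i - δ i) = N - ∑ j ∈ S, (c j + 1)
      have hts := Finset.sum_tsub_distrib (s := (univ : Finset (Fin ν))) (f := f) (g := δ)
        (fun i _ => hdle i)
      rw [hts, hf.1, hδsum]
    · intro g hg
      rw [Finset.Nat.mem_antidiagonalTuple] at hg
      rw [Finset.mem_filter, Finset.Nat.mem_antidiagonalTuple]
      constructor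
      · show ∑ i, (g i + δ i) = N
        rw [Finset.sum_add_distrib, hg, hδsum]
        omega
      · intro j hj
        have hh : δ j = c j + 1 := by simp [hδ, hj]
        show c j < g j + δ j
        omega
    · intro f hf
      rw [Finset.mem_filter, Finset.Nat.mem_antidiagonalTuple] at hf
      funext j
      show f j - δ j + δ j = f j
      have : δ j ≤ f j := by
        by_cases hj : j ∈ S
        · simpa [hδ, hj] using hf.2 j hj
        · simp [hδ, hj]
      omega
    · intro g _
      funext j
      show g j + δ j - δ j = g j
      omega
  · rw [Nat.cast_eq_zero]
    rw [Finset.card_eq_zero, Finset.filter_eq_empty_iff]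
    intro f hf
    rw [Finset.Nat.mem_antidiagonalTuple] at hf
    intro hall
    apply h
    calc ∑ j ∈ S, (c j + 1) ≤ ∑ j ∈ S, f j :=
          Finset.sum_le_sum fun j hj => hall j hj
      _ ≤ ∑ j, f j := Finset.sum_le_sum_of_subset (Finset.subset_univ S)
      _ = N := hf

lemma incl_excl (ν N : ℕ) (c : Fin ν → ℕ) :
    (((Fintype.piFinset fun j => range (c j + 1)).filter
        (fun α : Fin ν → ℕ => ∑ j, α j = N)).card : ℤ)
      = ∑ S ∈ (univ : Finset (Finset (Fin ν))),
          (-1 : ℤ) ^ S.card *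
            (((Finset.Nat.antidiagonalTuple ν N).filter (fun f => ∀ j ∈ S, c j < f j)).card : ℤ) := by
  have hrhs : ∀ S : Finset (Fin ν),
      (((Finset.Nat.antidiagonalTuple ν N).filter (fun f => ∀ j ∈ S, c j < f j)).card : ℤ)
        = ∑ f ∈ Finset.Nat.antidiagonalTuple ν N, (if ∀ j ∈ S, c j < f j then 1 else 0) := by
    intro S
    rw [Finset.card_filter]
    push_cast
    rfl
  simp_rw [hrhs, Finset.mul_sum]
  rw [Finset.sum_comm]
  have hinner : ∀ f ∈ Finset.Nat.antidiagonalTuple ν N,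
      ∑ S ∈ (univ : Finset (Finset (Fin ν))), (-1 : ℤ) ^ S.card * (if ∀ j ∈ S, c j < f j then 1 else 0)
        = if ∀ j, f j ≤ c j then 1 else 0 := by
    intro f _
    set B : Finset (Fin ν) := univ.filter (fun j => c j < f j) with hB
    have hsub : ∀ S : Finset (Fin ν), (∀ j ∈ S, c j < f j) ↔ S ⊆ B := by
      intro S
      constructor
      · intro hS j hj; rw [hB, Finset.mem_filter]; exact ⟨Finset.mem_univ j, hS j hj⟩
      · intro hS j hj; have := hS hj; rw [hB, Finset.mem_filter] at this; exact this.2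
    calc ∑ S ∈ (univ : Finset (Finset (Fin ν))), (-1 : ℤ) ^ S.card * (if ∀ j ∈ S, c j < f j then 1 else 0)
        = ∑ S ∈ (univ : Finset (Finset (Fin ν))), (if S ⊆ B then (-1 : ℤ) ^ S.card else 0) := by
          refine Finset.sum_congr rfl fun S _ => ?_
          by_cases hS : ∀ j ∈ S, c j < f j
          · rw [if_pos hS, if_pos ((hsub S).mp hS), mul_one]
          · rw [if_neg hS, if_neg (fun hc => hS ((hsub S).mpr hc)), mul_zero]
      _ = ∑ S ∈ (univ : Finset (Finset (Fin ν))).filter (· ⊆ B), (-1 : ℤ) ^ S.card := by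
          rw [Finset.sum_filter]
      _ = ∑ S ∈ B.powerset, (-1 : ℤ) ^ S.card := by
          congr 1
          ext S
          simp [Finset.mem_powerset]
      _ = if B = ∅ then 1 else 0 := Finset.sum_powerset_neg_one_pow_card
      _ = if ∀ j, f j ≤ c j then 1 else 0 := by
          congr 1
          rw [hB, eq_iff_iff, Finset.filter_eq_empty_iff]
          simp only [Finset.mem_univ, true_implies]
          constructor
          · intro hh j
            have := @hh j
            omega
          · intro hh j
            have := hh j
            omega
  have hset : (Finset.Nat.antidiagonalTuple ν N).filter (fun f => ∀ j, f j ≤ c j)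
      = (Fintype.piFinset fun j => range (c j + 1)).filter (fun α : Fin ν → ℕ => ∑ j, α j = N) := by
    ext f
    rw [Finset.mem_filter, Finset.mem_filter, Finset.Nat.mem_antidiagonalTuple,
      Fintype.mem_piFinset]
    constructor
    · intro ⟨h1, h2⟩
      exact ⟨fun j => Finset.mem_range.mpr (by have := h2 j; omega), h1⟩
    · intro ⟨h1, h2⟩
      exact ⟨h2, fun j => by have := Finset.mem_range.mp (h1 j); omega⟩
  rw [Finset.sum_congr rfl hinner, ← Finset.sum_filter, hset, Finset.sum_const,
    nsmul_eq_mul, mul_one]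



lemma key_vanish (n d b s m : ℕ) (hd : 0 < d) (hdn : d ≤ n) (hb : 1 ≤ b) (hbs : b + s ≤ d)
    (hm : (n : ℤ) - ⌈(n : ℚ) / (d : ℚ)⌉ < (m : ℤ)) :
    ∑ k ∈ range (m + 1), (-1 : ℤ) ^ k * (n.choose k : ℤ)
      * (((m - k) * b + (n - 1) - s).choose (n - 1) : ℤ) = 0 := by
  have hn : 0 < n := lt_of_lt_of_le hd hdn
  have hs : s ≤ n - 1 := by omega
  set c : ℕ := (n - 1) - s with hc
  -- the polynomial
  set P : Polynomial ℚ := Polynomial.C ((Nat.factorial (n - 1) : ℚ))⁻¹ *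
    ((descPochhammer ℚ (n - 1)).comp
      (Polynomial.C ((m * b + c : ℕ) : ℚ) - Polynomial.C ((b : ℕ) : ℚ) * Polynomial.X)) with hP
  have hdeg : P.natDegree < n := by
    have h1 : P.natDegree ≤ ((descPochhammer ℚ (n - 1)).comp
        (Polynomial.C ((m * b + c : ℕ) : ℚ) - Polynomial.C ((b : ℕ) : ℚ) * Polynomial.X)).natDegree :=
      natDegree_C_mul_le _ _
    have h2 : ((descPochhammer ℚ (n - 1)).comp
        (Polynomial.C ((m * b + c : ℕ) : ℚ) - Polynomial.C ((b : ℕ) : ℚ) * Polynomial.X)).natDegree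
        ≤ (descPochhammer ℚ (n - 1)).natDegree *
          (Polynomial.C ((m * b + c : ℕ) : ℚ) - Polynomial.C ((b : ℕ) : ℚ) * Polynomial.X).natDegree :=
      natDegree_comp_le
    have h3 : (Polynomial.C ((m * b + c : ℕ) : ℚ) - Polynomial.C ((b : ℕ) : ℚ) * Polynomial.X).natDegree ≤ 1 := by
      refine le_trans (natDegree_sub_le _ _) ?_
      rw [max_le_iff]
      constructor
      · exact le_trans (le_of_eq (natDegree_C _)) (by omega)
      · exact le_trans (natDegree_C_mul_le _ _) (le_of_eq natDegree_X)
    have h4 := descPochhammer_natDegree (R := ℚ) (n - 1)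
    calc P.natDegree ≤ _ := h1
      _ ≤ _ := h2
      _ ≤ (n - 1) * 1 := by rw [h4]; exact Nat.mul_le_mul_left _ h3
      _ < n := by omega
  have hevalarg : ∀ x : ℚ, P.eval x = ((Nat.factorial (n - 1) : ℚ))⁻¹ *
      (descPochhammer ℚ (n - 1)).eval (((m * b + c : ℕ) : ℚ) - ((b : ℕ) : ℚ) * x) := by
    intro x
    rw [hP]
    simp [Polynomial.eval_comp]
  have heval1 : ∀ k : ℕ, k ≤ m → P.eval (k : ℚ) = (((m - k) * b + c).choose (n - 1) : ℚ) := by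
    intro k hk
    have harg : ((m * b + c : ℕ) : ℚ) - ((b : ℕ) : ℚ) * (k : ℚ) = (((m - k) * b + c : ℕ) : ℚ) := by
      push_cast [Nat.cast_sub hk]
      ring
    rw [hevalarg, harg, descPochhammer_eval_eq_descFactorial,
      Nat.descFactorial_eq_factorial_mul_choose]
    push_cast
    rw [← mul_assoc, inv_mul_cancel₀ (by exact_mod_cast (Nat.factorial_ne_zero (n-1))), one_mul]
  have heval2 : ∀ k : ℕ, m < k → k ≤ n → P.eval (k : ℚ) = 0 := by
    intro k hmk hkn
    -- the integer value of the argument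
    have hq : ((⌈(n : ℚ) / (d : ℚ)⌉ - 1 : ℤ) : ℚ) * (d : ℚ) < (n : ℚ) := by
      have h1 : ((⌈(n : ℚ) / (d : ℚ)⌉ - 1 : ℤ) : ℚ) < (n : ℚ) / (d : ℚ) := by
        rw [← Int.lt_ceil]; omega
      have hd' : (0 : ℚ) < (d : ℚ) := by exact_mod_cast hd
      calc ((⌈(n : ℚ) / (d : ℚ)⌉ - 1 : ℤ) : ℚ) * (d : ℚ) < ((n : ℚ) / (d : ℚ)) * (d : ℚ) :=
            mul_lt_mul_of_pos_right h1 hd'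
        _ = (n : ℚ) := div_mul_cancel₀ _ (ne_of_gt hd')
    have hqd : (⌈(n : ℚ) / (d : ℚ)⌉ - 1) * (d : ℤ) ≤ (n : ℤ) - 1 := by
      have h2 : (⌈(n : ℚ) / (d : ℚ)⌉ - 1) * (d : ℤ) < (n : ℤ) := by exact_mod_cast hq
      omega
    set q : ℤ := ⌈(n : ℚ) / (d : ℚ)⌉ with hqdef
    have hw1 : (1 : ℤ) ≤ (k : ℤ) - (m : ℤ) := by omega
    have hwq : (k : ℤ) - (m : ℤ) ≤ q - 1 := by
      have hkn' : (k : ℤ) ≤ (n : ℤ) := by exact_mod_cast hkn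
      omega
    have hq2 : 2 ≤ q := by omega
    have hbds : (b : ℤ) ≤ (d : ℤ) - (s : ℤ) := by omega
    have hkey : (b : ℤ) * ((k : ℤ) - (m : ℤ)) ≤ (n : ℤ) - 1 - (s : ℤ) := by
      calc (b : ℤ) * ((k : ℤ) - (m : ℤ)) ≤ ((d : ℤ) - (s : ℤ)) * (q - 1) := by
            apply mul_le_mul hbds hwq (by omega) (by omega)
        _ = (q - 1) * (d : ℤ) - (q - 1) * (s : ℤ) := by ring
        _ ≤ ((n : ℤ) - 1) - (s : ℤ) := by nlinarith
    -- so the argument is a natural number < n - 1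
    set z : ℤ := (c : ℤ) - (b : ℤ) * ((k : ℤ) - (m : ℤ)) with hz
    have hz0 : 0 ≤ z := by
      have hcz : (c : ℤ) = (n : ℤ) - 1 - (s : ℤ) := by
        rw [hc]; push_cast; omega
      omega
    have hzlt : z < (n : ℤ) - 1 := by
      have hcz : (c : ℤ) ≤ (n : ℤ) - 1 := by rw [hc]; push_cast; omega
      nlinarith
    obtain ⟨N', hN'⟩ : ∃ N' : ℕ, (N' : ℤ) = z := ⟨z.toNat, Int.toNat_of_nonneg hz0⟩
    have hN'lt : N' < n - 1 := by omega
    have harg : ((m * b + c : ℕ) : ℚ) - ((b : ℕ) : ℚ) * (k : ℚ) = (N' : ℚ) := by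
      have hcast : ((N' : ℤ) : ℚ) = ((z : ℤ) : ℚ) := by rw [hN']
      rw [hz] at hcast
      push_cast at hcast ⊢
      linarith
    rw [hevalarg, harg, descPochhammer_eval_eq_descFactorial,
      Nat.descFactorial_eq_zero_iff_lt.mpr hN'lt]
    simp
  -- now the main computation
  suffices hQ : ((∑ k ∈ range (m + 1), (-1 : ℤ) ^ k * (n.choose k : ℤ)
      * (((m - k) * b + (n - 1) - s).choose (n - 1) : ℤ) : ℤ) : ℚ) = 0 by exact_mod_cast hQ
  push_cast
  have hterm : ∀ k ∈ range (m + 1),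
      (-1 : ℚ) ^ k * (n.choose k : ℚ) * (((m - k) * b + (n - 1) - s).choose (n - 1) : ℚ)
        = (-1 : ℚ) ^ k * (n.choose k : ℚ) * P.eval (k : ℚ) := by
    intro k hk
    have hk' := mem_range.mp hk
    have : (m - k) * b + (n - 1) - s = (m - k) * b + c := by omega
    rw [this, heval1 k (by omega)]
  rw [Finset.sum_congr rfl hterm]
  have hext : ∑ k ∈ range (m + 1), (-1 : ℚ) ^ k * (n.choose k : ℚ) * P.eval (k : ℚ)
      = ∑ k ∈ range (n + 1), (-1 : ℚ) ^ k * (n.choose k : ℚ) * P.eval (k : ℚ) := by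
    rcases le_total m n with hmn | hnm
    · refine Finset.sum_subset (by intro x hx; simp at hx ⊢; omega) ?_
      intro k hk1 hk2
      simp only [mem_range] at hk1 hk2
      rw [heval2 k (by omega) (by omega), mul_zero]
    · refine (Finset.sum_subset (by intro x hx; simp at hx ⊢; omega) ?_).symm
      intro k hk1 hk2
      simp only [mem_range] at hk1 hk2
      rw [Nat.choose_eq_zero_of_lt (by omega)]
      push_cast
      ring
  rw [hext]
  exact alt_sum_poly n hn P hdeg

lemma coeff_one_sub_X_pow (n k : ℕ) :
    (PowerSeries.coeff (R := ℤ) k) ((1 - PowerSeries.X) ^ n) = (-1) ^ k * (n.choose k : ℤ) := by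
  have hexp : (1 - PowerSeries.X : PowerSeries ℤ) ^ n
      = ∑ j ∈ range (n + 1), (PowerSeries.C (R := ℤ)) ((-1) ^ j * (n.choose j : ℤ)) * PowerSeries.X ^ j := by
    rw [sub_eq_add_neg, add_comm, add_pow]
    refine Finset.sum_congr rfl fun j _ => ?_
    rw [one_pow, mul_one, neg_pow, map_mul, map_pow, map_neg, map_one, map_natCast]
    ring
  rw [hexp, map_sum]
  simp_rw [PowerSeries.coeff_C_mul, PowerSeries.coeff_X_pow, mul_ite, mul_one, mul_zero]
  rw [Finset.sum_ite_eq (range (n + 1)) k (fun j => (-1 : ℤ) ^ j * (n.choose j : ℤ))]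
  split_ifs with h
  · rfl
  · rw [Nat.choose_eq_zero_of_lt (by simp at h; omega)]
    push_cast
    ring



/-- Bound on the a-invariant of the Veronese-type algebra `𝒱(a₁,…,aₙ; d)` for `n ≥ d`:
with `H(i)` the number of tuples `(α₁,…,αₙ)` of non-negative integers with
`Σ αⱼ = i·d` and `αⱼ ≤ i·aⱼ`, the power series `(1 − t)^n · Σ_{i≥0} H(i) t^i` over `ℤ`
is a polynomial of degree at most `n − ⌈n/d⌉`: its coefficient of `t^m` vanishes for
every `m > n − ⌈n/d⌉`. -/
theorem a_invariant_bound_veronese_type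
    (n d : ℕ) (hd : 0 < d) (hdn : d ≤ n) (a : Fin n → ℕ)
    (hmono : Monotone a) (h1 : ∀ j, 1 ≤ a j) (hle : ∀ j, a j ≤ d)
    (hsum : d < ∑ j, a j)
    (m : ℕ) (hm : (n : ℤ) - ⌈(n : ℚ) / (d : ℚ)⌉ < (m : ℤ)) :
    PowerSeries.coeff (R := ℤ) m
      ((1 - PowerSeries.X : PowerSeries ℤ) ^ n *
        PowerSeries.mk (fun i =>
          ((Finset.filter (fun α : Fin n → ℕ => ∑ j, α j = i * d)
              (Fintype.piFinset fun j => Finset.range (i * a j + 1))).card : ℤ))) = 0 := by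
  have hn : 0 < n := lt_of_lt_of_le hd hdn
  have hn1 : n - 1 + 1 = n := by omega
  have hca : ∀ N' : ℕ, ((Finset.Nat.antidiagonalTuple n N').card : ℤ)
      = (((N' + (n - 1)).choose (n - 1) : ℕ) : ℤ) := by
    intro N'
    conv_lhs => rw [← hn1]
    exact_mod_cast card_adt (n - 1) N'
  have hcardle : ∀ S : Finset (Fin n), S.card ≤ ∑ j ∈ S, a j := by
    intro S
    calc S.card = ∑ _j ∈ S, 1 := (Finset.card_eq_sum_ones S)
      _ ≤ ∑ j ∈ S, a j := Finset.sum_le_sum fun j _ => h1 j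
  set g : Finset (Fin n) → ℕ → ℤ := fun S i =>
    if (∑ j ∈ S, a j) < d then
      (((i * (d - ∑ j ∈ S, a j) + (n - 1) - S.card).choose (n - 1) : ℕ) : ℤ)
    else 0 with hg
  have hcard : ∀ i : ℕ,
      ((Finset.filter (fun α : Fin n → ℕ => ∑ j, α j = i * d)
          (Fintype.piFinset fun j => Finset.range (i * a j + 1))).card : ℤ)
        = ∑ S ∈ (univ : Finset (Finset (Fin n))), (-1 : ℤ) ^ S.card * g S i := by
    intro i
    rw [incl_excl n (i * d) (fun j => i * a j)]
    refine Finset.sum_congr rfl fun S _ => ?_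
    congr 1
    rw [card_filter_lb]
    have hsumS : ∑ j ∈ S, (i * a j + 1) = i * (∑ j ∈ S, a j) + S.card := by
      rw [Finset.sum_add_distrib, Finset.sum_const, smul_eq_mul, mul_one, ← Finset.mul_sum]
    rw [hsumS]
    set σ := ∑ j ∈ S, a j with hσ
    have hsS : S.card ≤ σ := hcardle S
    by_cases hgood : σ < d
    · have hmul : i * (d - σ) = i * d - i * σ := Nat.mul_sub i d σ
      have hile : i * σ ≤ i * d := Nat.mul_le_mul_left i hgood.le
      rw [hg]
      simp only [if_pos hgood]
      rw [← hσ]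
      split_ifs with hcond
      · rw [hca]
        norm_cast
        congr 1
        omega
      · have hlt : i * (d - σ) + (n - 1) - S.card < n - 1 := by omega
        rw [Nat.choose_eq_zero_of_lt hlt]
        simp
    · rw [hg]
      simp only [← hσ, if_neg hgood]
      have hSne : S.Nonempty := by
        by_contra he
        rw [Finset.not_nonempty_iff_eq_empty] at he
        rw [he, Finset.sum_empty] at hσ
        omega
      have hS1 : 1 ≤ S.card := Finset.card_pos.mpr hSne
      have hile : i * d ≤ i * σ := Nat.mul_le_mul_left i (by omega)
      rw [if_neg (by omega)]
  rw [PowerSeries.coeff_mul, Finset.Nat.sum_antidiagonal_eq_sum_range_succ_mk]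
  have hterm : ∀ k ∈ range (m + 1),
      (PowerSeries.coeff (R := ℤ) k) ((1 - PowerSeries.X : PowerSeries ℤ) ^ n) *
        (PowerSeries.coeff (R := ℤ) (m - k)) (PowerSeries.mk (fun i =>
          ((Finset.filter (fun α : Fin n → ℕ => ∑ j, α j = i * d)
              (Fintype.piFinset fun j => Finset.range (i * a j + 1))).card : ℤ)))
        = ∑ S ∈ (univ : Finset (Finset (Fin n))),
            (-1 : ℤ) ^ k * (n.choose k : ℤ) * ((-1 : ℤ) ^ S.card * g S (m - k)) := by
    intro k _
    rw [coeff_one_sub_X_pow, PowerSeries.coeff_mk, hcard (m - k), Finset.mul_sum]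
  rw [Finset.sum_congr rfl hterm, Finset.sum_comm]
  refine Finset.sum_eq_zero fun S _ => ?_
  by_cases hgood : (∑ j ∈ S, a j) < d
  · have hsS : S.card ≤ ∑ j ∈ S, a j := hcardle S
    have hkey := key_vanish n d (d - ∑ j ∈ S, a j) S.card m hd hdn (by omega) (by omega) hm
    calc ∑ k ∈ range (m + 1), (-1 : ℤ) ^ k * (n.choose k : ℤ) * ((-1 : ℤ) ^ S.card * g S (m - k))
        = (-1 : ℤ) ^ S.card * ∑ k ∈ range (m + 1), (-1 : ℤ) ^ k * (n.choose k : ℤ)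
            * (((m - k) * (d - ∑ j ∈ S, a j) + (n - 1) - S.card).choose (n - 1) : ℤ) := by
          rw [Finset.mul_sum]
          refine Finset.sum_congr rfl fun k _ => ?_
          rw [hg]
          simp only [if_pos hgood]
          ring
      _ = 0 := by rw [hkey, mul_zero]
  · refine Finset.sum_eq_zero fun k _ => ?_
    rw [hg]
    simp only [if_neg hgood]
    ring
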